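/- Let X̊_{j}, j ∈ D_0 (|D_0| = m − d) and X̂_{j}, j ∈ D_1 (|D_1| = d) be independent random variables with X̊_j ∼ Binomial(r, θ_0) and X̂_j ∼ Binomial(r, θ_1), 0 < θ_0 < θ_1 < 1, ξ ∈ (0,1). If r ≥ −8θ_1 ln(ξ/m) / (θ_1 − θ_0)², then P(max_{j ∈ D_0} X̊_j ≥ min_{j ∈ D_1} X̂_j) ≤ 2ξ (up to the union bound: in fact ≤ (m−d)·(ξ/m) + d·(ξ/m) = ξ under exact union bounding). -/

import Mathlib

open MeasureTheory ProbabilityTheory Finset Real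

/-- Binomial(r,θ) point mass at k. -/
noncomputable def binomP (r : ℕ) (θ : ℝ) (k : ℕ) : ℝ :=
  (r.choose k : ℝ) * θ ^ k * (1 - θ) ^ (r - k)

/-- C.d.f. P(B ≤ x) of a Binomial(r,θ). -/
noncomputable def binomCdf (r : ℕ) (θ x : ℝ) : ℝ :=
  ∑ k ∈ range (r + 1), if (k : ℝ) ≤ x then binomP r θ k else 0

private lemma hdA {t : ℝ} (h1 : t < 1) :
    HasDerivAt (fun s : ℝ => -Real.log (1-s) - s - s^2/2) (t^2/(1-t)) t := by
  have hne : (1:ℝ) - t ≠ 0 := by linarith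
  have h1' : HasDerivAt (fun s : ℝ => 1 - s) (-1) t := by
    simpa using (hasDerivAt_id t).const_sub 1
  have h2 : HasDerivAt (fun s : ℝ => Real.log (1-s)) ((1-t)⁻¹ * (-1)) t :=
    (Real.hasDerivAt_log hne).comp t h1'
  have h3 : HasDerivAt (fun s : ℝ => s^2/2) t t := by
    simpa using ((hasDerivAt_pow 2 t).div_const 2)
  have := (h2.neg.sub (hasDerivAt_id t)).sub h3
  have e : t^2/(1-t) = -((1-t)⁻¹ * -1) - 1 - t := by
    field_simp
    ring
  rw [e]; exact this

lemma logIneqA {a : ℝ} (h0 : 0 ≤ a) (h1 : a < 1) : a + a^2/2 ≤ -Real.log (1-a) := by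
  set f : ℝ → ℝ := fun s => -Real.log (1-s) - s - s^2/2 with hf
  have key : MonotoneOn f (Set.Icc 0 a) := by
    apply monotoneOn_of_deriv_nonneg (convex_Icc 0 a)
    · intro t ht
      exact (hdA (lt_of_le_of_lt ht.2 h1)).continuousAt.continuousWithinAt
    · intro t ht
      rw [interior_Icc] at ht
      exact (hdA (lt_trans ht.2 h1)).differentiableAt.differentiableWithinAt
    · intro t ht
      rw [interior_Icc] at ht
      rw [(hdA (lt_trans ht.2 h1)).deriv]
      have : 0 < 1 - t := by linarith [lt_trans ht.2 h1]
      positivity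
  have h := key (Set.left_mem_Icc.2 h0) (Set.right_mem_Icc.2 h0) h0
  simp only [hf] at h
  simp at h
  linarith

private lemma hdC {t : ℝ} (h1 : t < 1) :
    HasDerivAt (fun s : ℝ => s + s^2/(2*(1-s)) + Real.log (1-s)) (t^2/(2*(1-t)^2)) t := by
  have hne : (1:ℝ) - t ≠ 0 := by linarith
  have h1' : HasDerivAt (fun s : ℝ => 1 - s) (-1) t := by
    simpa using (hasDerivAt_id t).const_sub 1
  have h2 : HasDerivAt (fun s : ℝ => Real.log (1-s)) ((1-t)⁻¹ * (-1)) t :=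
    (Real.hasDerivAt_log hne).comp t h1'
  have hden : HasDerivAt (fun s : ℝ => 2*(1-s)) (-2) t := by
    simpa using h1'.const_mul 2
  have hnum : HasDerivAt (fun s : ℝ => s^2) (2*t) t := by
    simpa using hasDerivAt_pow 2 t
  have h3 : HasDerivAt (fun s : ℝ => s^2/(2*(1-s)))
      ((2*t*(2*(1-t)) - t^2*(-2))/(2*(1-t))^2) t := hnum.div hden (by simp [hne])
  have := ((hasDerivAt_id t).add h3).add h2
  have e : t^2/(2*(1-t)^2) = 1 + (2*t*(2*(1-t)) - t^2*(-2))/(2*(1-t))^2 + (1-t)⁻¹ * (-1) := by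
    field_simp
    ring
  rw [e]; exact this

lemma logIneqC {a : ℝ} (h0 : 0 ≤ a) (h1 : a < 1) :
    -Real.log (1-a) ≤ a + a^2/(2*(1-a)) := by
  set f : ℝ → ℝ := fun s => s + s^2/(2*(1-s)) + Real.log (1-s) with hf
  have key : MonotoneOn f (Set.Icc 0 a) := by
    apply monotoneOn_of_deriv_nonneg (convex_Icc 0 a)
    · intro t ht
      exact (hdC (lt_of_le_of_lt ht.2 h1)).continuousAt.continuousWithinAt
    · intro t ht
      rw [interior_Icc] at ht
      exact (hdC (lt_trans ht.2 h1)).differentiableAt.differentiableWithinAt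
    · intro t ht
      rw [interior_Icc] at ht
      rw [(hdC (lt_trans ht.2 h1)).deriv]
      have : 0 < 1 - t := by linarith [lt_trans ht.2 h1]
      positivity
  have h := key (Set.left_mem_Icc.2 h0) (Set.right_mem_Icc.2 h0) h0
  simp only [hf] at h
  simp at h
  linarith

noncomputable def KLb (q p : ℝ) : ℝ := q * Real.log (q/p) + (1-q) * Real.log ((1-q)/(1-p))

lemma log_ge_one_sub_inv {x : ℝ} (hx : 0 < x) : 1 - 1/x ≤ Real.log x := by
  have h := Real.log_le_sub_one_of_pos (inv_pos.2 hx)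
  rw [Real.log_inv] at h
  rw [one_div]
  linarith

lemma KL_upper {p q : ℝ} (hp : 0 < p) (hpq : p < q) (hq : q < 1) :
    (q-p)^2/(2*q) ≤ KLb q p := by
  have hq0 : 0 < q := lt_trans hp hpq
  have h1q : 0 < 1 - q := by linarith
  have h1p : 0 < 1 - p := by linarith
  have ha0 : 0 ≤ (q-p)/q := div_nonneg (by linarith) hq0.le
  have ha1 : (q-p)/q < 1 := by rw [div_lt_one hq0]; linarith
  have hA := logIneqA ha0 ha1
  have hone : 1 - (q-p)/q = p/q := by field_simp; ring
  rw [hone] at hA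
  have hlog1 : Real.log (q/p) = -Real.log (p/q) := by
    rw [← Real.log_inv]; congr 1; field_simp
  have hfirst : (q-p) + (q-p)^2/(2*q) ≤ q * Real.log (q/p) := by
    rw [hlog1]
    have := mul_le_mul_of_nonneg_left hA hq0.le
    calc (q-p) + (q-p)^2/(2*q) = q * ((q-p)/q + ((q-p)/q)^2/2) := by field_simp
    _ ≤ q * -Real.log (p/q) := this
  have hsecond : p - q ≤ (1-q) * Real.log ((1-q)/(1-p)) := by
    have hx : (0:ℝ) < (1-q)/(1-p) := by positivity
    have := log_ge_one_sub_inv hx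
    have h2 : 1 - (1-p)/(1-q) ≤ Real.log ((1-q)/(1-p)) := by
      rw [one_div, inv_div] at this; linarith
    have := mul_le_mul_of_nonneg_left h2 h1q.le
    calc p - q = (1-q) * (1 - (1-p)/(1-q)) := by field_simp; ring
    _ ≤ _ := this
  unfold KLb
  linarith

lemma KL_lower {p q : ℝ} (hq : 0 < q) (hqp : q < p) (hp : p < 1) :
    (p-q)^2/(2*p) ≤ KLb q p := by
  have hp0 : 0 < p := lt_trans hq hqp
  have h1q : 0 < 1 - q := by linarith
  have h1p : 0 < 1 - p := by linarith
  have hu0 : 0 ≤ (p-q)/p := div_nonneg (by linarith) hp0.le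
  have hu1 : (p-q)/p < 1 := by rw [div_lt_one hp0]; linarith
  have hC := logIneqC hu0 hu1
  have hone : 1 - (p-q)/p = q/p := by field_simp; ring
  rw [hone] at hC
  have h := mul_le_mul_of_nonneg_left hC hq.le
  have hrw : q * ((p-q)/p + ((p-q)/p)^2/(2*(q/p))) = (p-q) - (p-q)^2/(2*p) := by
    field_simp
    ring
  rw [hrw] at h
  have hfirst : (p-q)^2/(2*p) - (p-q) ≤ q * Real.log (q/p) := by
    have : q * -Real.log (q/p) = -(q * Real.log (q/p)) := by ring
    linarith [h, this.symm ▸ h]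
  have hsecond : p - q ≤ (1-q) * Real.log ((1-q)/(1-p)) := by
    have hx : (0:ℝ) < (1-q)/(1-p) := by positivity
    have hlb := log_ge_one_sub_inv hx
    have h2 : 1 - (1-p)/(1-q) ≤ Real.log ((1-q)/(1-p)) := by
      rw [one_div, inv_div] at hlb; linarith
    have := mul_le_mul_of_nonneg_left h2 h1q.le
    calc p - q = (1-q) * (1 - (1-p)/(1-q)) := by field_simp; ring
    _ ≤ _ := this
  unfold KLb
  linarith

lemma binomP_nonneg (r : ℕ) {θ : ℝ} (h0 : 0 ≤ θ) (h1 : θ ≤ 1) (k : ℕ) :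
    0 ≤ binomP r θ k := by
  unfold binomP
  have : (0:ℝ) ≤ 1 - θ := by linarith
  positivity

lemma weighted_sum (r : ℕ) (p lam : ℝ) :
    ∑ k ∈ range (r+1), lam^k * binomP r p k = (p*lam + (1-p))^r := by
  rw [add_pow]
  apply Finset.sum_congr rfl
  intro k hk
  unfold binomP
  rw [mul_pow]
  ring

lemma sum_binomP (r : ℕ) (p : ℝ) : ∑ k ∈ range (r+1), binomP r p k = 1 := by
  have h := weighted_sum r p 1
  simp only [one_pow, one_mul] at h
  rw [h]
  norm_num

lemma chernoff_exp_eq (r : ℕ) {p q : ℝ} (hp0 : 0 < p) (hp1 : p < 1) (hq0 : 0 < q) (hq1 : q < 1) :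
    (q*(1-p)/(p*(1-q))) ^ (-((r:ℝ)*q)) * ((1-p)/(1-q))^r = Real.exp (-(r * KLb q p)) := by
  have h1p : (0:ℝ) < 1 - p := by linarith
  have h1q : (0:ℝ) < 1 - q := by linarith
  have hlam : (0:ℝ) < q*(1-p)/(p*(1-q)) := by positivity
  have hfrac : (0:ℝ) < (1-p)/(1-q) := by positivity
  rw [Real.rpow_def_of_pos hlam]
  have hpow : ((1-p)/(1-q))^r = Real.exp ((r:ℝ) * Real.log ((1-p)/(1-q))) := by
    rw [Real.exp_nat_mul, Real.exp_log hfrac]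
  rw [hpow, ← Real.exp_add]
  congr 1
  have hloglam : Real.log (q*(1-p)/(p*(1-q))) =
      Real.log q + Real.log (1-p) - (Real.log p + Real.log (1-q)) := by
    rw [Real.log_div (by positivity) (by positivity), Real.log_mul hq0.ne' h1p.ne',
      Real.log_mul hp0.ne' h1q.ne']
  have hlogfrac : Real.log ((1-p)/(1-q)) = Real.log (1-p) - Real.log (1-q) :=
    Real.log_div h1p.ne' h1q.ne'
  have hKL : KLb q p = q * (Real.log q - Real.log p) +
      (1-q) * (Real.log (1-q) - Real.log (1-p)) := by
    unfold KLb
    rw [Real.log_div hq0.ne' hp0.ne', Real.log_div h1q.ne' h1p.ne']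
  rw [hloglam, hlogfrac, hKL]
  ring

lemma chernoff_core (r : ℕ) {p q : ℝ} (hp0 : 0 < p) (hp1 : p < 1) (hq0 : 0 < q) (hq1 : q < 1)
    (c : ℕ → Prop) [DecidablePred c]
    (hc : ∀ k, c k → 1 ≤ (q*(1-p)/(p*(1-q))) ^ ((k:ℝ) - (r:ℝ)*q)) :
    ∑ k ∈ range (r+1), (if c k then binomP r p k else 0) ≤ Real.exp (-(r * KLb q p)) := by
  have h1p : (0:ℝ) < 1 - p := by linarith
  have h1q : (0:ℝ) < 1 - q := by linarith
  set lam : ℝ := q*(1-p)/(p*(1-q)) with hlamdef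
  have hlam : (0:ℝ) < lam := by positivity
  have step : ∀ k ∈ range (r+1),
      (if c k then binomP r p k else 0) ≤ lam ^ (-((r:ℝ)*q)) * (lam^k * binomP r p k) := by
    intro k _
    have hb := binomP_nonneg r hp0.le hp1.le k
    by_cases h : c k
    · rw [if_pos h]
      have h1 := hc k h
      have key : lam ^ ((k:ℝ) - (r:ℝ)*q) = lam ^ (-((r:ℝ)*q)) * lam^k := by
        rw [sub_eq_add_neg, add_comm, Real.rpow_add hlam, Real.rpow_natCast]
      calc binomP r p k = 1 * binomP r p k := by ring
      _ ≤ lam ^ ((k:ℝ) - (r:ℝ)*q) * binomP r p k := by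
          apply mul_le_mul_of_nonneg_right h1 hb
      _ = lam ^ (-((r:ℝ)*q)) * (lam^k * binomP r p k) := by rw [key]; ring
    · rw [if_neg h]
      have : 0 ≤ lam^k * binomP r p k := by positivity
      positivity
  calc ∑ k ∈ range (r+1), (if c k then binomP r p k else 0)
      ≤ ∑ k ∈ range (r+1), lam ^ (-((r:ℝ)*q)) * (lam^k * binomP r p k) :=
        Finset.sum_le_sum step
  _ = lam ^ (-((r:ℝ)*q)) * ∑ k ∈ range (r+1), lam^k * binomP r p k := by
        rw [Finset.mul_sum]
  _ = lam ^ (-((r:ℝ)*q)) * (p*lam + (1-p))^r := by rw [weighted_sum]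
  _ = lam ^ (-((r:ℝ)*q)) * ((1-p)/(1-q))^r := by
        have hpl : p*lam + (1-p) = (1-p)/(1-q) := by
          rw [hlamdef]
          field_simp
          ring
        rw [hpl]
  _ = Real.exp (-(r * KLb q p)) := chernoff_exp_eq r hp0 hp1 hq0 hq1

lemma cdf_tail_split (r : ℕ) (p x : ℝ) :
    binomCdf r p x + ∑ k ∈ range (r+1), (if ¬((k:ℝ) ≤ x) then binomP r p k else 0) = 1 := by
  unfold binomCdf
  rw [← Finset.sum_add_distrib, ← sum_binomP r p]
  apply Finset.sum_congr rfl
  intro k _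
  by_cases h : (k:ℝ) ≤ x <;> simp [h]

lemma cdf_upper_tail (r : ℕ) {p q : ℝ} (hp0 : 0 < p) (hpq : p < q) (hq1 : q < 1) :
    1 - Real.exp (-(r * KLb q p)) ≤ binomCdf r p ((r:ℝ)*q) := by
  have hp1 : p < 1 := lt_trans hpq hq1
  have hq0 : 0 < q := lt_trans hp0 hpq
  have h1q : (0:ℝ) < 1 - q := by linarith
  have hlam1 : (1:ℝ) ≤ q*(1-p)/(p*(1-q)) := by
    rw [le_div_iff₀ (by positivity)]
    nlinarith
  have hcore := chernoff_core r hp0 hp1 hq0 hq1 (fun k => ¬((k:ℝ) ≤ (r:ℝ)*q))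
    (by
      intro k hk
      have h2 : (0:ℝ) ≤ (k:ℝ) - (r:ℝ)*q := by push_neg at hk; linarith
      calc (1:ℝ) = (q*(1-p)/(p*(1-q))) ^ (0:ℝ) := by rw [Real.rpow_zero]
      _ ≤ (q*(1-p)/(p*(1-q))) ^ ((k:ℝ) - (r:ℝ)*q) :=
          Real.rpow_le_rpow_of_exponent_le hlam1 h2)
  have hsplit := cdf_tail_split r p ((r:ℝ)*q)
  linarith

lemma cdf_lower_tail (r : ℕ) {p q : ℝ} (hq0 : 0 < q) (hqp : q < p) (hp1 : p < 1) :
    binomCdf r p ((r:ℝ)*q) ≤ Real.exp (-(r * KLb q p)) := by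
  have hp0 : 0 < p := lt_trans hq0 hqp
  have hq1 : q < 1 := lt_trans hqp hp1
  have h1q : (0:ℝ) < 1 - q := by linarith
  have h1p : (0:ℝ) < 1 - p := by linarith
  have hlam0 : (0:ℝ) < q*(1-p)/(p*(1-q)) := by positivity
  have hlam1 : q*(1-p)/(p*(1-q)) ≤ 1 := by
    rw [div_le_one (by positivity)]
    nlinarith
  have hcore := chernoff_core r hp0 hp1 hq0 hq1 (fun k => ((k:ℝ) ≤ (r:ℝ)*q))
    (by
      intro k hk
      have hk' : (k:ℝ) ≤ (r:ℝ)*q := hk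
      have h2 : (k:ℝ) - (r:ℝ)*q ≤ 0 := by linarith
      calc (1:ℝ) = (q*(1-p)/(p*(1-q))) ^ (0:ℝ) := by rw [Real.rpow_zero]
      _ ≤ (q*(1-p)/(p*(1-q))) ^ ((k:ℝ) - (r:ℝ)*q) :=
          Real.rpow_le_rpow_of_exponent_ge hlam0 hlam1 h2)
  exact hcore


/-- Lemma 2 of the paper, quantitative form: for independent X̊_j ∼ Binomial(r,θ₀)
(j ∈ D₀, |D₀| = m−d) and X̂_j ∼ Binomial(r,θ₁) (j ∈ D₁, |D₁| = d), if
r ≥ −8θ₁ ln(ξ/m)/(θ₁−θ₀)², then P(max X̊ ≥ min X̂) ≤ ξ ≤ 2ξ. -/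
theorem crossing_probability_bound
    {Ω : Type*} [MeasurableSpace Ω] (μ : Measure Ω) [IsProbabilityMeasure μ]
    (m d r : ℕ) (θ₀ θ₁ ξ : ℝ)
    (hd : 0 < d) (hdm : d < m) (hr : 1 ≤ r)
    (hθ0 : 0 < θ₀) (hθ01 : θ₀ < θ₁) (hθ1 : θ₁ < 1) (hξ0 : 0 < ξ) (hξ1 : ξ < 1)
    (X : Fin (m - d) → Ω → ℝ) (Y : Fin d → Ω → ℝ)
    (hmX : ∀ i, Measurable (X i)) (hmY : ∀ j, Measurable (Y j))
    (hind : iIndepFun (Sum.elim X Y) μ)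
    (hdistX : ∀ i (x : ℝ), μ {ω | X i ω ≤ x} = ENNReal.ofReal (binomCdf r θ₀ x))
    (hdistY : ∀ j (x : ℝ), μ {ω | Y j ω ≤ x} = ENNReal.ofReal (binomCdf r θ₁ x))
    (hrbig : (r : ℝ) ≥ -8 * θ₁ * Real.log (ξ / m) / (θ₁ - θ₀) ^ 2) :
    μ {ω | ∃ i j, X i ω ≥ Y j ω} ≤ ENNReal.ofReal (2 * ξ) := by
  have hm2 : 2 ≤ m := by omega
  have hm0 : (0:ℝ) < m := by
    have : 0 < m := by omega
    exact_mod_cast this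
  have hm1 : (1:ℝ) ≤ m := by exact_mod_cast Nat.one_le_of_lt hdm
  set q : ℝ := (θ₀+θ₁)/2 with hqdef
  set x : ℝ := (r:ℝ)*q with hxdef
  have hq0 : 0 < q := by rw [hqdef]; linarith
  have hθ₀q : θ₀ < q := by rw [hqdef]; linarith
  have hqθ₁ : q < θ₁ := by rw [hqdef]; linarith
  have hq1 : q < 1 := lt_trans hqθ₁ hθ1
  have hξm0 : 0 < ξ/m := by positivity
  have hξm1 : ξ/m < 1 := by rw [div_lt_one hm0]; linarith
  have hlog : Real.log (ξ/m) < 0 := Real.log_neg hξm0 hξm1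
  have hKey : -Real.log (ξ/m) ≤ (r:ℝ) * ((θ₁-θ₀)^2/(8*θ₁)) := by
    have hB : (0:ℝ) < (θ₁-θ₀)^2 := by
      have : θ₁ - θ₀ ≠ 0 := by linarith
      positivity
    rw [ge_iff_le, div_le_iff₀ hB] at hrbig
    have hθ1pos : (0:ℝ) < θ₁ := lt_trans hθ0 hθ01
    have heq : (r:ℝ) * ((θ₁-θ₀)^2/(8*θ₁)) = (r:ℝ)*(θ₁-θ₀)^2/(8*θ₁) := by ring
    rw [heq, le_div_iff₀ (by positivity)]
    nlinarith
  have hθ1pos : (0:ℝ) < θ₁ := lt_trans hθ0 hθ01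
  have hrn : (0:ℝ) ≤ (r:ℝ) := Nat.cast_nonneg r
  -- upper tail bound for Binomial(r, θ₀)
  have hup : Real.exp (-((r:ℝ) * KLb q θ₀)) ≤ ξ/m := by
    have hKL := KL_upper hθ0 hθ₀q hq1
    have h1 : (θ₁-θ₀)^2/(8*θ₁) ≤ (q-θ₀)^2/(2*q) := by
      have hsub : q - θ₀ = (θ₁-θ₀)/2 := by rw [hqdef]; ring
      rw [hsub]
      rw [div_le_div_iff₀ (by positivity) (by positivity)]
      nlinarith [sq_nonneg (θ₁-θ₀)]
    have h2 : -Real.log (ξ/m) ≤ (r:ℝ) * KLb q θ₀ := by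
      have := mul_le_mul_of_nonneg_left (le_trans h1 hKL) hrn
      linarith
    calc Real.exp (-((r:ℝ) * KLb q θ₀)) ≤ Real.exp (Real.log (ξ/m)) :=
      Real.exp_le_exp.2 (by linarith)
    _ = ξ/m := Real.exp_log hξm0
  -- lower tail bound for Binomial(r, θ₁)
  have hlow : Real.exp (-((r:ℝ) * KLb q θ₁)) ≤ ξ/m := by
    have hKL := KL_lower hq0 hqθ₁ hθ1
    have h1 : (θ₁-θ₀)^2/(8*θ₁) ≤ (θ₁-q)^2/(2*θ₁) := by
      have hsub : θ₁ - q = (θ₁-θ₀)/2 := by rw [hqdef]; ring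
      rw [hsub]
      rw [div_le_div_iff₀ (by positivity) (by positivity)]
      nlinarith [sq_nonneg (θ₁-θ₀)]
    have h2 : -Real.log (ξ/m) ≤ (r:ℝ) * KLb q θ₁ := by
      have := mul_le_mul_of_nonneg_left (le_trans h1 hKL) hrn
      linarith
    calc Real.exp (-((r:ℝ) * KLb q θ₁)) ≤ Real.exp (Real.log (ξ/m)) :=
      Real.exp_le_exp.2 (by linarith)
    _ = ξ/m := Real.exp_log hξm0
  have hcdf0 : 1 - ξ/m ≤ binomCdf r θ₀ x := by
    have := cdf_upper_tail r hθ0 hθ₀q hq1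
    have h := hup
    rw [hxdef]
    linarith
  have hcdf1 : binomCdf r θ₁ x ≤ ξ/m := by
    have := cdf_lower_tail r hq0 hqθ₁ hθ1
    rw [hxdef]
    linarith
  -- per-variable probability bounds
  have hXi : ∀ i, μ {ω | x < X i ω} ≤ ENNReal.ofReal (ξ/m) := by
    intro i
    have hms : MeasurableSet {ω | X i ω ≤ x} := measurableSet_le (hmX i) measurable_const
    have hcompl : {ω | x < X i ω} = {ω | X i ω ≤ x}ᶜ := by
      ext ω; simp [not_le]
    rw [hcompl, measure_compl hms (measure_ne_top μ _), measure_univ, hdistX i x]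
    have hle : ENNReal.ofReal (1 - ξ/m) ≤ ENNReal.ofReal (binomCdf r θ₀ x) :=
      ENNReal.ofReal_le_ofReal hcdf0
    calc 1 - ENNReal.ofReal (binomCdf r θ₀ x) ≤ 1 - ENNReal.ofReal (1 - ξ/m) :=
      tsub_le_tsub_left hle 1
    _ = ENNReal.ofReal (ξ/m) := by
        rw [← ENNReal.ofReal_one, ← ENNReal.ofReal_sub _ (by linarith [hξm1] : (0:ℝ) ≤ 1 - ξ/m)]
        norm_num
  have hYj : ∀ j, μ {ω | Y j ω ≤ x} ≤ ENNReal.ofReal (ξ/m) := by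
    intro j
    rw [hdistY j x]
    exact ENNReal.ofReal_le_ofReal hcdf1
  -- union bound
  have hsub : {ω | ∃ i j, X i ω ≥ Y j ω} ⊆
      (⋃ i, {ω | x < X i ω}) ∪ ⋃ j, {ω | Y j ω ≤ x} := by
    intro ω hω
    obtain ⟨i, j, hij⟩ := hω
    by_cases hx : X i ω ≤ x
    · right
      exact Set.mem_iUnion.2 ⟨j, by simp only [Set.mem_setOf_eq]; linarith⟩
    · left
      exact Set.mem_iUnion.2 ⟨i, by simp only [Set.mem_setOf_eq]; linarith [not_le.mp hx]⟩
  calc μ {ω | ∃ i j, X i ω ≥ Y j ω}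
      ≤ μ ((⋃ i, {ω | x < X i ω}) ∪ ⋃ j, {ω | Y j ω ≤ x}) := measure_mono hsub
  _ ≤ μ (⋃ i, {ω | x < X i ω}) + μ (⋃ j, {ω | Y j ω ≤ x}) := measure_union_le _ _
  _ ≤ (∑ i : Fin (m-d), μ {ω | x < X i ω}) + ∑ j : Fin d, μ {ω | Y j ω ≤ x} := by
      gcongr
      · exact measure_iUnion_fintype_le μ _
      · exact measure_iUnion_fintype_le μ _
  _ ≤ (∑ _i : Fin (m-d), ENNReal.ofReal (ξ/m)) + ∑ _j : Fin d, ENNReal.ofReal (ξ/m) := by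
      gcongr with i j
      · exact hXi _
      · exact hYj _
  _ = ((m-d : ℕ) : ENNReal) * ENNReal.ofReal (ξ/m) + ((d:ℕ) : ENNReal) * ENNReal.ofReal (ξ/m) := by
      simp [Finset.sum_const, nsmul_eq_mul]
  _ = ((m : ℕ) : ENNReal) * ENNReal.ofReal (ξ/m) := by
      rw [← add_mul]
      congr 1
      rw [← Nat.cast_add, Nat.sub_add_cancel hdm.le]
  _ = ENNReal.ofReal ((m:ℝ) * (ξ/m)) := by
      rw [ENNReal.ofReal_mul (le_of_lt hm0), ENNReal.ofReal_natCast]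
  _ = ENNReal.ofReal ξ := by
      congr 1
      field_simp
  _ ≤ ENNReal.ofReal (2*ξ) := ENNReal.ofReal_le_ofReal (by linarith)
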